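/- arXiv:1808.02690 — 6 statements merged into one kernel-verified Lean document; each statement's English description precedes it below -/
import Mathlib

section
/- Let R be a (not necessarily commutative) ring and let A, D, N̄, π ∈ R satisfy A·N̄ = 1 − π, and suppose that Q := D·N̄ and Q̂ := N̄·D are both nilpotent. Then 1+Q and 1+Q̂ are units and (A + D)·(1+Q̂)⁻¹·(1 − N̄·A) = π·(1+Q)⁻¹·(A + D). -/
/-- In a (not necessarily commutative) ring, if `A·N̄ = 1 − π` and
both `Q := D·N̄` and `Q̂ := N̄·D` are nilpotent, then `1+Q` and `1+Q̂` are units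
and `(A + D)·(1+Q̂)⁻¹·(1 − N̄·A) = π·(1+Q)⁻¹·(A + D)`. -/
theorem nonsemisimple_operator_identity
    {R : Type*} [Ring R] (A D Nb pr : R)
    (h : A * Nb = 1 - pr)
    (hQ : IsNilpotent (D * Nb)) (hQh : IsNilpotent (Nb * D)) :
    IsUnit (1 + D * Nb) ∧ IsUnit (1 + Nb * D) ∧
      (A + D) * Ring.inverse (1 + Nb * D) * (1 - Nb * A)
        = pr * Ring.inverse (1 + D * Nb) * (A + D) := by
  have hu : IsUnit (1 + D * Nb) := hQ.isUnit_one_add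
  have hv : IsUnit (1 + Nb * D) := hQh.isUnit_one_add
  refine ⟨hu, hv, ?_⟩
  set iu := Ring.inverse (1 + D * Nb) with hiu
  set iv := Ring.inverse (1 + Nb * D) with hiv
  have f1 : (1 + D * Nb) * iu = 1 := Ring.mul_inverse_cancel _ hu
  have f2 : iu * (1 + D * Nb) = 1 := Ring.inverse_mul_cancel _ hu
  have f3 : (1 + Nb * D) * iv = 1 := Ring.mul_inverse_cancel _ hv
  have f4 : iv * (1 + Nb * D) = 1 := Ring.inverse_mul_cancel _ hv
  -- D * iv = iu * D, since (1 + D Nb) * D = D * (1 + Nb D)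
  have f5 : D * iv = iu * D := by
    have : iu * ((1 + D * Nb) * D) * iv = iu * (D * (1 + Nb * D)) * iv := by
      noncomm_ring
    calc D * iv = iu * ((1 + D * Nb) * D) * iv := by rw [← mul_assoc, f2, one_mul]
      _ = iu * (D * (1 + Nb * D)) * iv := this
      _ = iu * D * ((1 + Nb * D) * iv) := by noncomm_ring
      _ = iu * D := by rw [f3, mul_one]
  -- iv * Nb = Nb * iu, since Nb * (1 + D Nb) = (1 + Nb D) * Nb
  have f6 : iv * Nb = Nb * iu := by
    have : iv * ((1 + Nb * D) * Nb) * iu = iv * (Nb * (1 + D * Nb)) * iu := by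
      noncomm_ring
    calc iv * Nb = iv * Nb * ((1 + D * Nb) * iu) := by rw [f1, mul_one]
      _ = iv * (Nb * (1 + D * Nb)) * iu := by noncomm_ring
      _ = iv * ((1 + Nb * D) * Nb) * iu := this.symm
      _ = (iv * (1 + Nb * D)) * (Nb * iu) := by noncomm_ring
      _ = Nb * iu := by rw [f4, one_mul]
  have g1 : D * Nb * (iu * A) = A - iu * A := by
    calc D * Nb * (iu * A) = ((1 + D * Nb) * iu) * A - iu * A := by noncomm_ring
      _ = A - iu * A := by rw [f1, one_mul]
  have g2 : A * iv = A - (1 - pr) * (iu * D) := by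
    have : A * iv = A * ((1 + Nb * D) * iv) - (A * Nb) * (D * iv) := by noncomm_ring
    rw [this, f3, f5, h, mul_one]
  calc (A + D) * iv * (1 - Nb * A)
      = A * iv + D * iv - A * (iv * Nb) * A - D * (iv * Nb) * A := by noncomm_ring
    _ = A * iv + iu * D - (A * Nb) * (iu * A) - D * Nb * (iu * A) := by
        rw [f5, f6]; noncomm_ring
    _ = A * iv + iu * D - (1 - pr) * (iu * A) - (A - iu * A) := by rw [h, g1]
    _ = (A * iv - A) + iu * D + pr * (iu * A) := by noncomm_ring
    _ = -((1 - pr) * (iu * D)) + iu * D + pr * (iu * A) := by rw [g2]; noncomm_ring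
    _ = pr * iu * (A + D) := by noncomm_ring
end

section
/- Let m₁₁, m₁₂, m₂₂, ε be real numbers. Define the 2×2 real matrices X = [[ε·m₁₁, ε·m₁₂], [−1, ε·m₂₂]] and X̄ = [[ε_A, ε_B], [−1, ε_A]], where ε_A = (1/2)·ε·(m₁₁ + m₂₂) and ε_B = (ε²·m₁₁·m₂₂ + ε·m₁₂) − (1/4)·ε²·(m₁₁ + m₂₂)². Then the characteristic polynomial of X̄ equals the characteristic polynomial of X, and there exists an invertible 2×2 real matrix T such that X·T = T·X̄. -/
open Polynomial in
lemma charpoly_fin_two' (a b c d : ℝ) :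
    (!![a, b; c, d] : Matrix (Fin 2) (Fin 2) ℝ).charpoly =
      X ^ 2 - C (a + d) * X + C (a * d - b * c) := by
  unfold Matrix.charpoly
  rw [Matrix.det_fin_two]
  simp [Matrix.charmatrix_apply, Matrix.one_apply]
  ring

/-- The planar perturbed nilpotent matrix
`X = [[ε·m₁₁, ε·m₁₂], [−1, ε·m₂₂]]` has the same characteristic polynomial as its
versal normal form `X̄ = [[ε_A, ε_B], [−1, ε_A]]` with
`ε_A = (1/2)·ε·(m₁₁+m₂₂)` and `ε_B = (ε²·m₁₁·m₂₂ + ε·m₁₂) − (1/4)·ε²·(m₁₁+m₂₂)²`,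
and there is an invertible `T` with `X·T = T·X̄`. -/
theorem versal_normal_form_2d (m11 m12 m22 ε : ℝ) :
    let εA : ℝ := (1/2) * ε * (m11 + m22)
    let εB : ℝ := (ε^2 * m11 * m22 + ε * m12) - (1/4) * ε^2 * (m11 + m22)^2
    let X : Matrix (Fin 2) (Fin 2) ℝ := !![ε * m11, ε * m12; -1, ε * m22]
    let Xbar : Matrix (Fin 2) (Fin 2) ℝ := !![εA, εB; -1, εA]
    Xbar.charpoly = X.charpoly ∧
      ∃ T : Matrix (Fin 2) (Fin 2) ℝ, IsUnit T ∧ X * T = T * Xbar := by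
  intro εA εB X Xbar
  constructor
  · show Xbar.charpoly = X.charpoly
    rw [show Xbar = !![εA, εB; -1, εA] from rfl,
      show X = !![ε * m11, ε * m12; -1, ε * m22] from rfl,
      charpoly_fin_two', charpoly_fin_two']
    congr 2 <;> simp only [εA, εB] <;> ring
  · refine ⟨!![1, (1/2) * ε * (m22 - m11); 0, 1], ?_, ?_⟩
    · rw [Matrix.isUnit_iff_isUnit_det]
      simp [Matrix.det_fin_two]
    · ext i j
      fin_cases i <;> fin_cases j <;>
        simp [X, Xbar, εA, εB, Matrix.mul_apply, Fin.sum_univ_two] <;> ring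
end

section
/- Let ε_A, ε_B be real numbers and let X̄₀ : ℝ² → ℝ² be the linear vector field X̄₀(x, y) = (ε_A·x + ε_B·y, −x + ε_A·y). Then for every vector field X₁ : ℝ² → ℝ² whose two components are homogeneous polynomials of degree 2, there exist a vector field t₁ : ℝ² → ℝ² whose components are homogeneous polynomials of degree 2 and real numbers c_A, c_B such that for all (x, y) ∈ ℝ², [X̄₀, t₁](x, y) = X₁(x, y) − c_A·(x·y, y²) − c_B·(y², 0). -/
/-- A planar vector field whose two components are homogeneous polynomials of
degree 2. -/
def IsHomQuadVF2 (f : ℝ × ℝ → ℝ × ℝ) : Prop :=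
  ∃ a1 a2 a3 b1 b2 b3 : ℝ, ∀ p : ℝ × ℝ,
    f p = (a1 * p.1 ^ 2 + a2 * p.1 * p.2 + a3 * p.2 ^ 2,
           b1 * p.1 ^ 2 + b2 * p.1 * p.2 + b3 * p.2 ^ 2)

lemma hasFDerivAt_scalar_quad (a1 a2 a3 : ℝ) (p : ℝ × ℝ) :
    HasFDerivAt (fun q : ℝ × ℝ => a1 * q.1 ^ 2 + a2 * q.1 * q.2 + a3 * q.2 ^ 2)
      ((2 * a1 * p.1 + a2 * p.2) • ContinuousLinearMap.fst ℝ ℝ ℝ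
        + (a2 * p.1 + 2 * a3 * p.2) • ContinuousLinearMap.snd ℝ ℝ ℝ) p := by
  have h1 : HasFDerivAt (fun q : ℝ × ℝ => q.1) (ContinuousLinearMap.fst ℝ ℝ ℝ) p :=
    hasFDerivAt_fst
  have h2 : HasFDerivAt (fun q : ℝ × ℝ => q.2) (ContinuousLinearMap.snd ℝ ℝ ℝ) p :=
    hasFDerivAt_snd
  have h := ((((h1.mul h1).const_mul a1).add
      (((h1.mul h2)).const_mul a2)).add ((h2.mul h2).const_mul a3))
  have heq : (fun q : ℝ × ℝ => a1 * q.1 ^ 2 + a2 * q.1 * q.2 + a3 * q.2 ^ 2)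
      = fun q : ℝ × ℝ => a1 * (q.1 * q.1) + a2 * (q.1 * q.2) + a3 * (q.2 * q.2) := by
    funext q; ring
  rw [heq]
  refine h.congr_fderiv ?_
  ext
  · simp
    ring
  · simp
    ring

lemma fderiv_quadVF_apply (a1 a2 a3 b1 b2 b3 : ℝ) (p v : ℝ × ℝ) :
    fderiv ℝ (fun q : ℝ × ℝ =>
        (a1 * q.1 ^ 2 + a2 * q.1 * q.2 + a3 * q.2 ^ 2,
         b1 * q.1 ^ 2 + b2 * q.1 * q.2 + b3 * q.2 ^ 2)) p v
      = ((2 * a1 * p.1 + a2 * p.2) * v.1 + (a2 * p.1 + 2 * a3 * p.2) * v.2,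
         (2 * b1 * p.1 + b2 * p.2) * v.1 + (b2 * p.1 + 2 * b3 * p.2) * v.2) := by
  have h := (hasFDerivAt_scalar_quad a1 a2 a3 p).prodMk (hasFDerivAt_scalar_quad b1 b2 b3 p)
  rw [HasFDerivAt.fderiv (f := fun q : ℝ × ℝ =>
      (a1 * q.1 ^ 2 + a2 * q.1 * q.2 + a3 * q.2 ^ 2,
       b1 * q.1 ^ 2 + b2 * q.1 * q.2 + b3 * q.2 ^ 2)) h]
  simp

lemma fderiv_linVF_apply (εA εB : ℝ) (p v : ℝ × ℝ) :
    fderiv ℝ (fun q : ℝ × ℝ => (εA * q.1 + εB * q.2, -q.1 + εA * q.2)) p v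
      = (εA * v.1 + εB * v.2, -v.1 + εA * v.2) := by
  have h1 : HasFDerivAt (fun q : ℝ × ℝ => q.1) (ContinuousLinearMap.fst ℝ ℝ ℝ) p :=
    hasFDerivAt_fst
  have h2 : HasFDerivAt (fun q : ℝ × ℝ => q.2) (ContinuousLinearMap.snd ℝ ℝ ℝ) p :=
    hasFDerivAt_snd
  have h := (((h1.const_mul εA).add (h2.const_mul εB)).prodMk
      ((h1.neg).add (h2.const_mul εA)))
  rw [HasFDerivAt.fderiv (f := fun q : ℝ × ℝ => (εA * q.1 + εB * q.2, -q.1 + εA * q.2)) h]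
  simp

/-- For the linear vector field
`X̄₀(x,y) = (ε_A·x + ε_B·y, −x + ε_A·y)`, every homogeneous quadratic vector
field `X₁` can be brought into normal form: there are a homogeneous quadratic
vector field `t₁` and reals `c_A, c_B` with
`[X̄₀, t₁] = X₁ − c_A·(xy, y²) − c_B·(y², 0)`, where
`[f, g](p) = Dg(p)(f(p)) − Df(p)(g(p))`. -/
theorem quadratic_normal_form_2d (εA εB : ℝ)
    (X1 : ℝ × ℝ → ℝ × ℝ) (hX1 : IsHomQuadVF2 X1) :
    ∃ t1 : ℝ × ℝ → ℝ × ℝ, IsHomQuadVF2 t1 ∧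
      ∃ cA cB : ℝ, ∀ p : ℝ × ℝ,
        fderiv ℝ t1 p ((fun q : ℝ × ℝ => (εA * q.1 + εB * q.2, -q.1 + εA * q.2)) p)
          - fderiv ℝ (fun q : ℝ × ℝ => (εA * q.1 + εB * q.2, -q.1 + εA * q.2)) p (t1 p)
        = X1 p - cA • (p.1 * p.2, p.2 ^ 2) - cB • (p.2 ^ 2, (0 : ℝ)) := by
  obtain ⟨a1, a2, a3, b1, b2, b3, hX⟩ := hX1
  -- solution coefficients
  set α2 : ℝ := -a1 with hα2
  set β2 : ℝ := -b1 with hβ2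
  set β3 : ℝ := (εA * β2 + α2 - b2) / 2 with hβ3
  set α3 : ℝ := (εA * α2 - 2 * εB * β2 - εA * β3 - a2 + b3) / 3 with hα3
  refine ⟨fun q : ℝ × ℝ =>
      ((0 : ℝ) * q.1 ^ 2 + α2 * q.1 * q.2 + α3 * q.2 ^ 2,
       (0 : ℝ) * q.1 ^ 2 + β2 * q.1 * q.2 + β3 * q.2 ^ 2),
    ⟨0, α2, α3, 0, β2, β3, fun p => rfl⟩,
    b3 - εB * β2 - εA * β3 - α3, a3 - εB * α2 - εA * α3 + εB * β3, fun p => ?_⟩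
  rw [fderiv_quadVF_apply, fderiv_linVF_apply, hX]
  simp only [Prod.mk_sub_mk, Prod.smul_mk, smul_eq_mul, Prod.mk.injEq]
  constructor <;> · simp only [hα3, hβ3]; ring
end

section
/- Let m₁₁, m₁₂, m₁₃, m₂₂, m₂₃, m₃₃, ε be real numbers. Define the 3×3 real matrices X = [[ε·m₁₁, ε·m₁₂, ε·m₁₃], [−1, ε·m₂₂, ε·m₂₃], [0, −2, ε·m₃₃]] and X̄ = [[ε_A, 2·ε_B, ε_C], [−1, ε_A, ε_B], [0, −2, ε_A]], where, writing Δ₁, Δ₂, Δ₃ for the coefficients of the characteristic polynomial of X via charpoly(X) = λ³ − Δ₁·λ² + Δ₂·λ − Δ₃, one sets ε_A = Δ₁/3, ε_B = Δ₂/4 − Δ₁²/12, ε_C = Δ₃/2 − Δ₁·Δ₂/6 + Δ₁³/27. Define T = [[1, ε·t₁, ε·t₂], [0, 1, ε·t₃], [0, 0, 1]] with t₁ = (1/3)·(m₃₃ + m₂₂ − 2·m₁₁), t₂ = (5/36)·ε·m₁₁·(m₁₁ − m₂₂ − m₃₃) − (1/36)·ε·m₂₂·(m₂₂ − 7·m₃₃)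 − (1/36)·ε·m₃₃² + (1/2)·m₂₃ − (1/4)·m₁₂, and t₃ = (1/3)·(m₃₃ − (1/2)·m₂₂ − (1/2)·m₁₁). Then T is invertible and X·T = T·X̄. -/
/-- For the perturbed 3-dimensional irreducible nilpotent matrix
`X = [[ε·m₁₁, ε·m₁₂, ε·m₁₃], [−1, ε·m₂₂, ε·m₂₃], [0, −2, ε·m₃₃]]` with
characteristic polynomial `λ³ − Δ₁·λ² + Δ₂·λ − Δ₃`, setting
`ε_A = Δ₁/3`, `ε_B = Δ₂/4 − Δ₁²/12`, `ε_C = Δ₃/2 − Δ₁·Δ₂/6 + Δ₁³/27`, the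
explicit upper-triangular matrix `T` is invertible and conjugates `X` to its
versal normal form `X̄ = [[ε_A, 2ε_B, ε_C], [−1, ε_A, ε_B], [0, −2, ε_A]]`. -/
theorem versal_normal_form_3d (m11 m12 m13 m22 m23 m33 ε Δ1 Δ2 Δ3 : ℝ)
    (X : Matrix (Fin 3) (Fin 3) ℝ)
    (hX : X = !![ε*m11, ε*m12, ε*m13; -1, ε*m22, ε*m23; 0, -2, ε*m33])
    (hchar : X.charpoly =
      Polynomial.X ^ 3 - Polynomial.C Δ1 * Polynomial.X ^ 2
        + Polynomial.C Δ2 * Polynomial.X - Polynomial.C Δ3) :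
    let εA : ℝ := Δ1 / 3
    let εB : ℝ := Δ2 / 4 - Δ1 ^ 2 / 12
    let εC : ℝ := Δ3 / 2 - Δ1 * Δ2 / 6 + Δ1 ^ 3 / 27
    let Xbar : Matrix (Fin 3) (Fin 3) ℝ := !![εA, 2*εB, εC; -1, εA, εB; 0, -2, εA]
    let t1 : ℝ := (1/3) * (m33 + m22 - 2*m11)
    let t2 : ℝ := (5/36)*ε*m11*(m11 - m22 - m33) - (1/36)*ε*m22*(m22 - 7*m33)
        - (1/36)*ε*m33^2 + (1/2)*m23 - (1/4)*m12
    let t3 : ℝ := (1/3) * (m33 - (1/2)*m22 - (1/2)*m11)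
    let T : Matrix (Fin 3) (Fin 3) ℝ := !![1, ε*t1, ε*t2; 0, 1, ε*t3; 0, 0, 1]
    IsUnit T ∧ X * T = T * Xbar := by
  intro εA εB εC Xbar t1 t2 t3 T
  have hc : X.charpoly =
      Polynomial.X ^ 3 - Polynomial.C (ε*(m11+m22+m33)) * Polynomial.X ^ 2
        + Polynomial.C (ε^2*(m11*m22+m11*m33+m22*m33) + ε*m12 + 2*ε*m23) * Polynomial.X
        - Polynomial.C (ε^3*(m11*m22*m33) + 2*ε^2*m11*m23 + ε^2*m12*m33 + 2*ε*m13) := by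
    subst hX
    rw [Matrix.charpoly, Matrix.det_fin_three]
    simp [Matrix.charmatrix_apply, Matrix.diagonal]
    ring
  have key := hchar.symm.trans hc
  have e1 : Δ1 = ε*(m11+m22+m33) := by
    have h := congrArg (fun p => Polynomial.coeff p 2) key
    simp only [Polynomial.coeff_add, Polynomial.coeff_sub, Polynomial.coeff_C_mul,
      Polynomial.coeff_X_pow, Polynomial.coeff_X, Polynomial.coeff_C] at h
    norm_num at h
    linarith
  have e2 : Δ2 = ε^2*(m11*m22+m11*m33+m22*m33) + ε*m12 + 2*ε*m23 := by
    have h := congrArg (fun p => Polynomial.coeff p 1) key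
    simp only [Polynomial.coeff_add, Polynomial.coeff_sub, Polynomial.coeff_C_mul,
      Polynomial.coeff_X_pow, Polynomial.coeff_X, Polynomial.coeff_C] at h
    norm_num at h
    linarith
  have e3 : Δ3 = ε^3*(m11*m22*m33) + 2*ε^2*m11*m23 + ε^2*m12*m33 + 2*ε*m13 := by
    have h := congrArg (fun p => Polynomial.coeff p 0) key
    simp only [Polynomial.coeff_add, Polynomial.coeff_sub, Polynomial.coeff_C_mul,
      Polynomial.coeff_X_pow, Polynomial.coeff_X, Polynomial.coeff_C] at h
    norm_num at h
    linarith
  constructor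
  · rw [Matrix.isUnit_iff_isUnit_det]
    have : T.det = 1 := by
      show Matrix.det !![1, ε*t1, ε*t2; 0, 1, ε*t3; 0, 0, 1] = 1
      rw [Matrix.det_fin_three]
      simp [Matrix.vecHead, Matrix.vecTail]
    rw [this]; exact isUnit_one
  · subst hX
    show _ * T = T * Xbar
    ext i j
    fin_cases i <;> fin_cases j <;>
      simp [Matrix.mul_apply, Fin.sum_univ_three, Matrix.vecHead, Matrix.vecTail, T, Xbar, εA, εB, εC, t1, t2, t3,
        e1, e2, e3] <;> ring
end

section
/- Let m₁₁, m₁₂, m₁₃, m₂₂, m₂₃, m₃₃, ε be real numbers, let X = [[ε·m₁₁, ε·m₁₂, ε·m₁₃], [−1, ε·m₂₂, ε·m₂₃], [0, −2, ε·m₃₃]], and write its characteristic polynomial as charpoly(X) = λ³ − Δ₁·λ² + Δ₂·λ − Δ₃. Set ε_A = Δ₁/3, ε_B = Δ₂/4 − Δ₁²/12, ε_C = Δ₃/2 − Δ₁·Δ₂/6 + Δ₁³/27, and X̄ = [[ε_A, 2·ε_B, ε_C], [−1, ε_A, ε_B], [0, −2, ε_A]]. Then charpoly(X̄) = λ³ −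 3·ε_A·λ² + (3·ε_A² + 4·ε_B)·λ − (ε_A³ + 4·ε_A·ε_B + 2·ε_C), and this polynomial equals charpoly(X). -/
open Polynomial in
lemma cp3_aux (a b c d e f g h i : ℝ) :
    (!![a,b,c;d,e,f;g,h,i] : Matrix (Fin 3) (Fin 3) ℝ).charpoly =
      X^3 - C (a+e+i) * X^2 + C (a*e+a*i+e*i-b*d-c*g-f*h) * X
        - C (a*e*i + b*f*g + c*d*h - c*e*g - b*d*i - a*f*h) := by
  rw [Matrix.charpoly, Matrix.det_fin_three]
  simp [Matrix.charmatrix_apply, Matrix.one_apply]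
  ring

/-- For the perturbed 3-dimensional irreducible nilpotent matrix
`X = [[ε·m₁₁, ε·m₁₂, ε·m₁₃], [−1, ε·m₂₂, ε·m₂₃], [0, −2, ε·m₃₃]]` with
characteristic polynomial `λ³ − Δ₁·λ² + Δ₂·λ − Δ₃`, setting
`ε_A = Δ₁/3`, `ε_B = Δ₂/4 − Δ₁²/12`, `ε_C = Δ₃/2 − Δ₁·Δ₂/6 + Δ₁³/27`, the
versal normal form `X̄ = [[ε_A, 2ε_B, ε_C], [−1, ε_A, ε_B], [0, −2, ε_A]]` has
characteristic polynomial
`λ³ − 3ε_A·λ² + (3ε_A² + 4ε_B)·λ − (ε_A³ + 4ε_A·ε_B + 2ε_C)`, which equals the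
characteristic polynomial of `X`. -/
theorem charpoly_versal_normal_form_3d (m11 m12 m13 m22 m23 m33 ε Δ1 Δ2 Δ3 : ℝ)
    (X : Matrix (Fin 3) (Fin 3) ℝ)
    (hX : X = !![ε*m11, ε*m12, ε*m13; -1, ε*m22, ε*m23; 0, -2, ε*m33])
    (hchar : X.charpoly =
      Polynomial.X ^ 3 - Polynomial.C Δ1 * Polynomial.X ^ 2
        + Polynomial.C Δ2 * Polynomial.X - Polynomial.C Δ3) :
    let εA : ℝ := Δ1 / 3
    let εB : ℝ := Δ2 / 4 - Δ1 ^ 2 / 12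
    let εC : ℝ := Δ3 / 2 - Δ1 * Δ2 / 6 + Δ1 ^ 3 / 27
    let Xbar : Matrix (Fin 3) (Fin 3) ℝ := !![εA, 2*εB, εC; -1, εA, εB; 0, -2, εA]
    Xbar.charpoly =
        Polynomial.X ^ 3 - Polynomial.C (3 * εA) * Polynomial.X ^ 2
          + Polynomial.C (3 * εA ^ 2 + 4 * εB) * Polynomial.X
          - Polynomial.C (εA ^ 3 + 4 * εA * εB + 2 * εC) ∧
      Xbar.charpoly = X.charpoly := by
  intro εA εB εC Xbar
  have h1 : Xbar.charpoly =
      Polynomial.X ^ 3 - Polynomial.C (3 * εA) * Polynomial.X ^ 2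
        + Polynomial.C (3 * εA ^ 2 + 4 * εB) * Polynomial.X
        - Polynomial.C (εA ^ 3 + 4 * εA * εB + 2 * εC) := by
    show (!![εA, 2*εB, εC; -1, εA, εB; 0, -2, εA] : Matrix (Fin 3) (Fin 3) ℝ).charpoly = _
    rw [cp3_aux]
    congr 1
    · congr 2 <;> ring
    · congr 1; ring
  refine ⟨h1, ?_⟩
  rw [h1, hchar]
  have e1 : 3 * εA = Δ1 := by show 3 * (Δ1/3) = Δ1; ring
  have e2 : 3 * εA ^ 2 + 4 * εB = Δ2 := by
    show 3 * (Δ1/3) ^ 2 + 4 * (Δ2 / 4 - Δ1 ^ 2 / 12) = Δ2; ring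
  have e3 : εA ^ 3 + 4 * εA * εB + 2 * εC = Δ3 := by
    show (Δ1/3) ^ 3 + 4 * (Δ1/3) * (Δ2 / 4 - Δ1 ^ 2 / 12)
      + 2 * (Δ3 / 2 - Δ1 * Δ2 / 6 + Δ1 ^ 3 / 27) = Δ3; ring
  rw [e1, e2, e3]
end

section
/- Let ε be a real number with −(6 + 4·√2)/3 < ε < (6 − 4·√2)/3, so that D := −(3·ε − 6 + 4·√2)·(3·ε + 6 + 4·√2) > 0. Set α₁ = √D, ε_N = 1/4 − α₁/8, and ε_S = (1/2)·(√2 − (1/2)·√(4 + 2·α₁)). Then 2·ε_S·(√2 − ε_S) = 2·ε_N and (4·ε_N − 1)² = −(1/4)·(3·ε − 6 + 4·√2)·(3·ε + 6 + 4·√2). -/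
/-- For `ε` in the interval `(−(6+4√2)/3, (6−4√2)/3)`, so that
`D := −(3ε−6+4√2)(3ε+6+4√2) > 0`, the versal parameters
`ε_N = 1/4 − √D/8` and `ε_S = (1/2)(√2 − (1/2)√(4+2√D))` satisfy
`2ε_S(√2 − ε_S) = 2ε_N` and `(4ε_N − 1)² = −(1/4)(3ε−6+4√2)(3ε+6+4√2)`. -/
theorem versal_parameters_L4 (ε : ℝ)
    (hlo : -(6 + 4 * Real.sqrt 2) / 3 < ε)
    (hhi : ε < (6 - 4 * Real.sqrt 2) / 3)
    (hD : -((3 * ε - 6 + 4 * Real.sqrt 2) * (3 * ε + 6 + 4 * Real.sqrt 2)) > 0) :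
    let α1 : ℝ := Real.sqrt (-((3 * ε - 6 + 4 * Real.sqrt 2)
        * (3 * ε + 6 + 4 * Real.sqrt 2)))
    let εN : ℝ := 1/4 - α1 / 8
    let εS : ℝ := (1/2) * (Real.sqrt 2 - (1/2) * Real.sqrt (4 + 2 * α1))
    2 * εS * (Real.sqrt 2 - εS) = 2 * εN ∧
      (4 * εN - 1) ^ 2 = -(1/4) * (3 * ε - 6 + 4 * Real.sqrt 2)
          * (3 * ε + 6 + 4 * Real.sqrt 2) := by
  intro α1 εN εS
  have hα1 : 0 ≤ α1 := Real.sqrt_nonneg _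
  have hα2 : α1 ^ 2 = -((3 * ε - 6 + 4 * Real.sqrt 2) * (3 * ε + 6 + 4 * Real.sqrt 2)) :=
    Real.sq_sqrt hD.le
  have hs : Real.sqrt (4 + 2 * α1) ^ 2 = 4 + 2 * α1 := by
    apply Real.sq_sqrt; linarith
  constructor
  · show 2 * ((1/2) * (Real.sqrt 2 - (1/2) * Real.sqrt (4 + 2 * α1))) *
      (Real.sqrt 2 - (1/2) * (Real.sqrt 2 - (1/2) * Real.sqrt (4 + 2 * α1))) = 2 * (1/4 - α1 / 8)
    have h2 : Real.sqrt 2 ^ 2 = 2 := Real.sq_sqrt (by norm_num)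
    nlinarith [hs, h2]
  · show (4 * (1/4 - α1 / 8) - 1) ^ 2 = -(1/4) * (3 * ε - 6 + 4 * Real.sqrt 2)
          * (3 * ε + 6 + 4 * Real.sqrt 2)
    nlinarith [hα2]
end
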